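/- Let a > 0, γ < 1, A > 0. The map Φ : (z,w) ↦ (√(1 − γ|w|²)·z, √a·e^{i h(z)}·w), for any smooth real function h, when expressed in the coordinates 𝒫 = |z|², R = |w|², 𝒫' = |z'|², R' = |w'|², sends 𝒫' = (1 − γR)𝒫, R' = aR; and it pushes forward the vector field X with Ṙ = 1 − R, 𝒫̇ = −((1−γ)/(1−γR))𝒫 to a vector field whose (R',𝒫') components are Ṙ' = a − R' and 𝒫̇' = −𝒫'. -/

import Mathlib

/-- Lemma "cse" (ii)-(iii): the map `Φ(z,w) = (√(1−γ|w|²)z, √a e^{ih(z)}w)` sends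
`𝒫 = |z|²`, `R = |w|²` to `𝒫' = (1 − γR)𝒫`, `R' = aR`; and it pushes the vector
field with `Ṙ = 1 − R`, `𝒫̇ = −((1−γ)/(1−γR))𝒫` forward to one with radial
components `Ṙ' = a − R'`, `𝒫̇' = −𝒫'`. -/
theorem cse_coordinate_change (a γ A : ℝ) (ha : 0 < a) (hγ : γ < 1) (hA : 0 < A)
    (h : ℂ → ℝ) (R P : ℝ → ℝ) (hRγ : ∀ t, 1 - γ * R t ≠ 0)
    (hR : ∀ t, HasDerivAt R (1 - R t) t)
    (hP : ∀ t, HasDerivAt P (-((1 - γ) / (1 - γ * R t)) * P t) t) :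
    (∀ z w : ℂ, 0 ≤ 1 - γ * ‖w‖ ^ 2 →
      ‖(Real.sqrt (1 - γ * ‖w‖ ^ 2) : ℂ) * z‖ ^ 2 = (1 - γ * ‖w‖ ^ 2) * ‖z‖ ^ 2 ∧
      ‖(Real.sqrt a : ℂ) * Complex.exp (Complex.I * (h z : ℂ)) * w‖ ^ 2
        = a * ‖w‖ ^ 2) ∧
    (∀ t, HasDerivAt (fun s => a * R s) (a - a * R t) t) ∧
    (∀ t, HasDerivAt (fun s => (1 - γ * R s) * P s) (-((1 - γ * R t) * P t)) t) := by
  refine ⟨?_, ?_, ?_⟩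
  · intro z w hw
    constructor
    · rw [norm_mul, mul_pow, Complex.norm_real, Real.norm_eq_abs,
        abs_of_nonneg (Real.sqrt_nonneg _), Real.sq_sqrt hw]
    · have he : ‖Complex.exp (Complex.I * (h z : ℂ))‖ = 1 := by
        rw [mul_comm, Complex.norm_exp_ofReal_mul_I]
      rw [norm_mul, norm_mul, he, mul_one, mul_pow, Complex.norm_real,
        Real.norm_eq_abs, abs_of_nonneg (Real.sqrt_nonneg _),
        Real.sq_sqrt ha.le]
  · intro t
    have := (hR t).const_mul a
    simpa [mul_sub] using this
  · intro t
    have h1 : HasDerivAt (fun s => 1 - γ * R s) (-(γ * (1 - R t))) t := by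
      simpa using (((hR t).const_mul γ).const_sub 1)
    have := h1.mul (hP t)
    refine this.congr_deriv ?_
    have hne := hRγ t
    field_simp
    ring
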